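/- Let g : S¹ × [−1,1] → S¹ × [−1,1] be the involution g(z,s) = (conj(z), −s) of the annulus. Then the quotient topological space of S¹ × [−1,1] by the equivalence relation identifying (z,s) with g(z,s) is homeomorphic to the closed unit disk D² = {w ∈ ℂ : |w| ≤ 1}. (This realizes the annulus as the double cover of a disk branched over two points, as in the proof of Proposition 5 of the paper.) -/

import Mathlib

set_option maxHeartbeats 1000000


/-- The unit circle in the complex plane. -/
def S1 : Set ℂ := {z : ℂ | ‖z‖ = 1}

/-- The closed unit disk in the complex plane. -/
def D2 : Set ℂ := {w : ℂ | ‖w‖ ≤ 1}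

/-- The involution `g(z,s) = (conj z, −s)` of the annulus `S¹ × [−1,1]`. -/
def annulusInv (p : ↥(S1 ×ˢ Set.Icc (-1 : ℝ) 1)) : ↥(S1 ×ˢ Set.Icc (-1 : ℝ) 1) :=
  ⟨((starRingEnd ℂ) p.val.1, -p.val.2), by
    obtain ⟨h1, h2⟩ := p.property
    simp only [S1, Set.mem_prod, Set.mem_setOf_eq, Set.mem_Icc] at *
    exact ⟨by simp [h1], by constructor <;> linarith [h2.1, h2.2]⟩⟩


noncomputable def Fmap (p : ↥(S1 ×ˢ Set.Icc (-1 : ℝ) 1)) : ℂ :=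
  (p.val.1.re * Real.cosh p.val.2 / Real.cosh 1 : ℝ) +
    (p.val.1.im * Real.sinh p.val.2 / Real.sinh 1 : ℝ) * Complex.I

lemma Fmap_re (p) : (Fmap p).re = p.val.1.re * Real.cosh p.val.2 / Real.cosh 1 := by
  simp only [Fmap, Complex.add_re, Complex.ofReal_re, Complex.mul_re, Complex.I_re,
    Complex.I_im, Complex.ofReal_im, mul_zero, mul_one, zero_sub, add_neg_cancel_right,
    zero_mul, sub_zero]
  ring

lemma Fmap_im (p) : (Fmap p).im = p.val.1.im * Real.sinh p.val.2 / Real.sinh 1 := by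
  simp only [Fmap, Complex.add_im, Complex.ofReal_im, Complex.mul_im, Complex.I_re,
    Complex.I_im, Complex.ofReal_re, mul_zero, mul_one, zero_mul, add_zero, zero_add]

lemma sq_add_sq_of_mem_S1 {z : ℂ} (hz : z ∈ S1) : z.re ^ 2 + z.im ^ 2 = 1 := by
  have h := Complex.sq_norm z
  rw [show ‖z‖ = 1 from hz] at h
  simp [Complex.normSq_apply] at h
  nlinarith [h]

lemma Fmap_mem_D2 (p) : Fmap p ∈ D2 := by
  obtain ⟨⟨z, s⟩, hz, hs⟩ := p
  have hzz := sq_add_sq_of_mem_S1 hz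
  have hs1 : |s| ≤ 1 := abs_le.2 ⟨hs.1, hs.2⟩
  have hc : Real.cosh s ≤ Real.cosh 1 := Real.cosh_le_cosh.2 (by simpa using hs1)
  have hsh : |Real.sinh s| ≤ Real.sinh 1 := by
    rw [Real.abs_sinh]; exact Real.sinh_le_sinh.2 hs1
  have hc0 : (0:ℝ) < Real.cosh 1 := Real.cosh_pos 1
  have hs0 : (0:ℝ) < Real.sinh 1 := by rw [← Real.sinh_zero]; exact Real.sinh_lt_sinh.2 one_pos
  have hcs : (0:ℝ) < Real.cosh s := Real.cosh_pos s
  have key : (Fmap ⟨(z, s), hz, hs⟩).re ^ 2 + (Fmap ⟨(z, s), hz, hs⟩).im ^ 2 ≤ 1 := by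
    rw [Fmap_re, Fmap_im]
    have hcc : Real.cosh s ^ 2 ≤ Real.cosh 1 ^ 2 := by nlinarith
    have hss : Real.sinh s ^ 2 ≤ Real.sinh 1 ^ 2 := by
      nlinarith [abs_nonneg (Real.sinh s), sq_abs (Real.sinh s)]
    have h1 : (z.re * Real.cosh s / Real.cosh 1) ^ 2 ≤ z.re ^ 2 := by
      rw [div_pow, div_le_iff₀ (by positivity), mul_pow]
      nlinarith [mul_nonneg (sq_nonneg z.re) (by linarith : (0:ℝ) ≤ Real.cosh 1 ^ 2 - Real.cosh s ^ 2)]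
    have h2 : (z.im * Real.sinh s / Real.sinh 1) ^ 2 ≤ z.im ^ 2 := by
      rw [div_pow, div_le_iff₀ (by positivity), mul_pow]
      nlinarith [mul_nonneg (sq_nonneg z.im) (by linarith : (0:ℝ) ≤ Real.sinh 1 ^ 2 - Real.sinh s ^ 2)]
    linarith
  show ‖_‖ ≤ 1
  have h3 : (‖Fmap ⟨(z, s), hz, hs⟩‖) ^ 2 ≤ 1 := by
    rw [Complex.sq_norm, Complex.normSq_apply]; nlinarith [key]
  nlinarith [norm_nonneg (Fmap ⟨(z, s), hz, hs⟩), h3]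

lemma Fmap_annulusInv (p) : Fmap (annulusInv p) = Fmap p := by
  apply Complex.ext <;>
    simp only [Fmap_re, Fmap_im, annulusInv, Complex.conj_re, Complex.conj_im,
      Real.cosh_neg, Real.sinh_neg] <;> ring

lemma Fmap_continuous : Continuous Fmap := by
  apply Continuous.add
  · exact Complex.continuous_ofReal.comp <| by fun_prop
  · exact Continuous.mul (Complex.continuous_ofReal.comp <| by fun_prop) continuous_const

lemma mem_annulus {x y s : ℝ} (h : x ^ 2 + y ^ 2 = 1) (hs : -1 ≤ s) (hs' : s ≤ 1) :
    ((⟨x, y⟩ : ℂ), s) ∈ S1 ×ˢ Set.Icc (-1 : ℝ) 1 := by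
  refine ⟨?_, hs, hs'⟩
  show ‖(⟨x, y⟩ : ℂ)‖ = 1
  rw [Complex.norm_def, Complex.normSq_apply]
  rw [show (⟨x, y⟩ : ℂ).re = x from rfl, show (⟨x, y⟩ : ℂ).im = y from rfl]
  rw [show x * x + y * y = 1 by nlinarith]
  exact Real.sqrt_one

lemma Fmap_surj (w : ℂ) (hw : w ∈ D2) : ∃ p, Fmap p = w := by
  have hc0 : (0:ℝ) < Real.cosh 1 := Real.cosh_pos 1
  have hs0 : (0:ℝ) < Real.sinh 1 := by rw [← Real.sinh_zero]; exact Real.sinh_lt_sinh.2 one_pos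
  set a := w.re with ha
  set b := w.im with hb
  have hab : a ^ 2 + b ^ 2 ≤ 1 := by
    have h3 : (‖w‖) ^ 2 ≤ 1 := by nlinarith [norm_nonneg w, show ‖w‖ ≤ 1 from hw]
    rw [Complex.sq_norm, Complex.normSq_apply] at h3
    nlinarith [h3]
  by_cases hbz : b = 0
  · by_cases hsmall : |a| * Real.cosh 1 ≤ 1
    · -- point on the segment: s = 0
      have hx1 : (a * Real.cosh 1) ^ 2 ≤ 1 := by
        have : |a * Real.cosh 1| ≤ 1 := by
          rwa [abs_mul, abs_of_pos hc0]
        nlinarith [abs_nonneg (a * Real.cosh 1), sq_abs (a * Real.cosh 1)]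
      set x := a * Real.cosh 1
      set y := Real.sqrt (1 - x ^ 2)
      have hy2 : y ^ 2 = 1 - x ^ 2 := Real.sq_sqrt (by nlinarith)
      refine ⟨⟨(⟨x, y⟩, 0), mem_annulus (by linarith) (by norm_num) (by norm_num)⟩, ?_⟩
      apply Complex.ext
      · rw [Fmap_re]
        show x * Real.cosh 0 / Real.cosh 1 = a
        rw [Real.cosh_zero]; field_simp; exact mul_comm _ _
      · rw [Fmap_im]
        show y * Real.sinh 0 / Real.sinh 1 = b
        rw [Real.sinh_zero, hbz]; ring
    · -- endpoint region on the real axis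
      push_neg at hsmall
      have haz : a ≠ 0 := by
        intro h0; rw [h0, abs_zero, zero_mul] at hsmall; linarith
      have ha1 : |a| ≤ 1 := by nlinarith [sq_abs a, abs_nonneg a]
      have hmem : |a| * Real.cosh 1 ∈ Set.Icc (Real.cosh 0) (Real.cosh 1) := by
        constructor
        · rw [Real.cosh_zero]; linarith
        · nlinarith [hc0]
      obtain ⟨t, ht01, ht⟩ := intermediate_value_Icc (by norm_num : (0:ℝ) ≤ 1)
        Real.continuous_cosh.continuousOn hmem
      set x : ℝ := if 0 < a then 1 else -1 with hxdef
      have hax : x * |a| = a := by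
        rcases lt_or_ge 0 a with h | h
        · rw [hxdef, if_pos h, abs_of_pos h]; ring
        · rw [hxdef, if_neg (not_lt.2 h), abs_of_nonpos h]; ring
      refine ⟨⟨(⟨x, 0⟩, t), mem_annulus ?_ (by linarith [ht01.1]) ht01.2⟩, ?_⟩
      · rcases lt_or_ge 0 a with h | h <;> simp [hxdef, if_pos, if_neg, h, not_lt.2] <;> norm_num
      apply Complex.ext
      · rw [Fmap_re]
        show x * Real.cosh t / Real.cosh 1 = a
        rw [ht]; field_simp [hax]; nlinarith [hax]
      · rw [Fmap_im]
        show (0:ℝ) * Real.sinh t / Real.sinh 1 = b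
        rw [hbz]; ring
  · -- generic point: solve for the confocal ellipse parameter by IVT
    set A := a * Real.cosh 1 with hA
    set B := b * Real.sinh 1 with hB
    have hBz : B ≠ 0 := mul_ne_zero hbz (ne_of_gt hs0)
    have hk1 : A ^ 2 * Real.sinh 1 ^ 2 + B ^ 2 * Real.cosh 1 ^ 2
        - Real.sinh 1 ^ 2 * Real.cosh 1 ^ 2 ≤ 0 := by
      rw [hA, hB]
      nlinarith [mul_nonneg (mul_nonneg (sq_nonneg (Real.sinh 1)) (sq_nonneg (Real.cosh 1)))
        (by linarith : (0:ℝ) ≤ 1 - (a ^ 2 + b ^ 2))]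
    have hk0 : (0:ℝ) ≤ A ^ 2 * Real.sinh 0 ^ 2 + B ^ 2 * Real.cosh 0 ^ 2
        - Real.sinh 0 ^ 2 * Real.cosh 0 ^ 2 := by
      rw [Real.sinh_zero, Real.cosh_zero]
      have := sq_nonneg B
      nlinarith [sq_nonneg A]
    obtain ⟨t, ht01, ht⟩ := intermediate_value_Icc' (by norm_num : (0:ℝ) ≤ 1)
      (Continuous.continuousOn (by fun_prop) :
        ContinuousOn (fun t : ℝ => A ^ 2 * Real.sinh t ^ 2 + B ^ 2 * Real.cosh t ^ 2
          - Real.sinh t ^ 2 * Real.cosh t ^ 2) (Set.Icc 0 1)) ⟨hk1, hk0⟩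
    have ht' : A ^ 2 * Real.sinh t ^ 2 + B ^ 2 * Real.cosh t ^ 2
        - Real.sinh t ^ 2 * Real.cosh t ^ 2 = 0 := ht
    have htpos : 0 < t := by
      rcases eq_or_lt_of_le ht01.1 with h | h
      · exfalso
        rw [← h, Real.sinh_zero, Real.cosh_zero] at ht'
        have hb2 : B ^ 2 = 0 := by nlinarith [ht']
        exact hBz (pow_eq_zero_iff two_ne_zero |>.mp hb2)
      · exact h
    have hst : 0 < Real.sinh t := Real.sinh_pos_iff.2 htpos
    have hct : 0 < Real.cosh t := Real.cosh_pos t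
    set x := A / Real.cosh t with hx
    set y := B / Real.sinh t with hy
    have hxy : x ^ 2 + y ^ 2 = 1 := by
      rw [hx, hy]
      field_simp
      nlinarith [ht']
    refine ⟨⟨(⟨x, y⟩, t), mem_annulus hxy (by linarith [ht01.1]) ht01.2⟩, ?_⟩
    apply Complex.ext
    · rw [Fmap_re]
      show x * Real.cosh t / Real.cosh 1 = a
      rw [hx, div_mul_cancel₀ _ (ne_of_gt hct), hA, mul_div_cancel_right₀ _ (ne_of_gt hc0)]
    · rw [Fmap_im]
      show y * Real.sinh t / Real.sinh 1 = b
      rw [hy, div_mul_cancel₀ _ (ne_of_gt hst), hB, mul_div_cancel_right₀ _ (ne_of_gt hs0)]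

lemma Fmap_inj (p q : ↥(S1 ×ˢ Set.Icc (-1 : ℝ) 1)) (h : Fmap p = Fmap q) :
    q = p ∨ q = annulusInv p := by
  obtain ⟨⟨z, s⟩, hz, hs⟩ := p
  obtain ⟨⟨z', s'⟩, hz', hs'⟩ := q
  have hc0 : (0:ℝ) < Real.cosh 1 := Real.cosh_pos 1
  have hs0 : (0:ℝ) < Real.sinh 1 := by rw [← Real.sinh_zero]; exact Real.sinh_lt_sinh.2 one_pos
  set x := z.re with hxd
  set y := z.im with hyd
  set x' := z'.re with hxd'
  set y' := z'.im with hyd'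
  have hy : y ^ 2 = 1 - x ^ 2 := by have := sq_add_sq_of_mem_S1 hz; linarith
  have hy' : y' ^ 2 = 1 - x' ^ 2 := by have := sq_add_sq_of_mem_S1 hz'; linarith
  have hre := congrArg Complex.re h
  have him := congrArg Complex.im h
  rw [Fmap_re, Fmap_re] at hre
  rw [Fmap_im, Fmap_im] at him
  have hA : x * Real.cosh s = x' * Real.cosh s' := by
    field_simp at hre; exact hre
  have hBe : y * Real.sinh s = y' * Real.sinh s' := by
    field_simp at him; exact him
  have hA2 : x ^ 2 * Real.cosh s ^ 2 = x' ^ 2 * Real.cosh s' ^ 2 := by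
    have := congrArg (fun r : ℝ => r ^ 2) hA
    simpa only [mul_pow] using this
  have hB2 : y ^ 2 * Real.sinh s ^ 2 = y' ^ 2 * Real.sinh s' ^ 2 := by
    have := congrArg (fun r : ℝ => r ^ 2) hBe
    simpa only [mul_pow] using this
  rw [Real.cosh_sq, Real.cosh_sq] at hA2
  rw [hy, hy'] at hB2
  have key : (x' ^ 2 - x ^ 2) * (Real.sinh s' ^ 2 + 1 - x ^ 2) = 0 := by
    linear_combination (x ^ 2 - 1) * hA2 + x ^ 2 * hB2
  have hx2le : x ^ 2 ≤ 1 := by nlinarith [sq_nonneg y]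
  have hx2le' : x' ^ 2 ≤ 1 := by nlinarith [sq_nonneg y']
  rcases mul_eq_zero.1 key with hcase | hcase
  · -- x'^2 = x^2
    have hS : Real.sinh s ^ 2 = Real.sinh s' ^ 2 := by
      linear_combination hA2 + hB2 + hcase
    have hcosh : Real.cosh s = Real.cosh s' := by
      nlinarith [Real.cosh_pos s, Real.cosh_pos s', Real.cosh_sq s, Real.cosh_sq s']
    have hxx : x = x' := by
      have := hA; rw [hcosh] at this
      exact mul_right_cancel₀ (ne_of_gt (Real.cosh_pos s')) this
    by_cases hss : Real.sinh s = 0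
    · -- s = s' = 0
      have hs00 : s = 0 := Real.sinh_eq_zero.1 hss
      have hs'0 : s' = 0 := by
        refine Real.sinh_eq_zero.1 (pow_eq_zero_iff two_ne_zero |>.mp ?_)
        rw [← hS, hss]; ring
      have hyy : y' = y ∨ y' = -y := sq_eq_sq_iff_eq_or_eq_neg.1 (by linarith [hy, hy', hcase] : y' ^ 2 = y ^ 2)
      rcases hyy with h1 | h1
      · left
        apply Subtype.ext; apply Prod.ext
        · exact Complex.ext hxx.symm h1
        · show s' = s
          rw [hs'0, hs00]
      · right
        apply Subtype.ext; apply Prod.ext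
        · exact Complex.ext hxx.symm (by simpa [annulusInv] using h1)
        · show s' = -s
          rw [hs00, hs'0]; ring
    · have hss' : Real.sinh s' = Real.sinh s ∨ Real.sinh s' = -Real.sinh s :=
        sq_eq_sq_iff_eq_or_eq_neg.1 hS.symm
      rcases hss' with h1 | h1
      · left
        have hseq : s' = s := Real.sinh_injective h1
        have hyy : y = y' := by
          rw [hseq] at hBe
          exact mul_right_cancel₀ hss hBe
        apply Subtype.ext; apply Prod.ext
        · exact Complex.ext hxx.symm hyy.symm
        · exact hseq
      · right
        have hseq : s' = -s := Real.sinh_injective (by rw [h1, Real.sinh_neg])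
        have hyy : y' = -y := by
          rw [h1] at hBe
          have h3 : y * Real.sinh s = -y' * Real.sinh s := by
            linear_combination hBe
          have h2 := mul_right_cancel₀ hss h3
          linarith
        apply Subtype.ext; apply Prod.ext
        · exact Complex.ext hxx.symm (by simpa [annulusInv] using hyy)
        · exact hseq
  · -- degenerate: both at a branch point
    have hsinh' : Real.sinh s' = 0 := by nlinarith [sq_nonneg (Real.sinh s')]
    have hx2 : x ^ 2 = 1 := by nlinarith [sq_nonneg (Real.sinh s')]
    have hs'0 : s' = 0 := Real.sinh_eq_zero.1 hsinh'
    have hy0 : y = 0 := by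
      have : y ^ 2 = 0 := by linarith [hy]
      exact pow_eq_zero_iff two_ne_zero |>.mp this
    -- from hA2 : x^2 (sinh s^2+1) = x'^2 (sinh s'^2+1)
    have hsinh : Real.sinh s = 0 := by
      rw [hsinh'] at hA2
      nlinarith [sq_nonneg (Real.sinh s)]
    have hs00 : s = 0 := Real.sinh_eq_zero.1 hsinh
    have hxx : x = x' := by
      rw [hs00, hs'0, Real.cosh_zero, mul_one, mul_one] at hA
      exact hA
    have hy'0 : y' = 0 := by
      have hx'2 : x' ^ 2 = 1 := by rw [← hxx]; exact hx2
      have : y' ^ 2 = 0 := by linarith [hy']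
      exact pow_eq_zero_iff two_ne_zero |>.mp this
    left
    apply Subtype.ext; apply Prod.ext
    · exact Complex.ext hxx.symm (by show y' = y; rw [hy0, hy'0])
    · show s' = s
      rw [hs'0, hs00]

lemma S1_isCompact : IsCompact S1 := by
  have : S1 = Metric.sphere (0 : ℂ) 1 := by
    ext z
    simp [S1, Metric.mem_sphere, dist_zero_right]
  rw [this]
  exact isCompact_sphere 0 1

noncomputable def Gmap : Quot (fun a b => b = annulusInv a) → ↥D2 :=
  Quot.lift (fun p => ⟨Fmap p, Fmap_mem_D2 p⟩)
    (fun a b hab => Subtype.ext (show Fmap a = Fmap b by rw [hab, Fmap_annulusInv]))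

/-- The quotient of the annulus `S¹ × [−1,1]` by the identification
`(z,s) ∼ g(z,s)` is homeomorphic to the closed unit disk `D²`. -/
theorem stmt9 :
    Nonempty (Quot (fun a b => b = annulusInv a) ≃ₜ ↥D2) := by
  haveI : CompactSpace ↥(S1 ×ˢ Set.Icc (-1 : ℝ) 1) :=
    isCompact_iff_compactSpace.mp (S1_isCompact.prod isCompact_Icc)
  have hGc : Continuous Gmap :=
    continuous_quot_lift _ (Fmap_continuous.subtype_mk _)
  have hGbij : Function.Bijective Gmap := by
    constructor
    · intro qa qb
      induction qa using Quot.ind with | _ a =>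
      induction qb using Quot.ind with | _ b =>
      intro hab
      have hF : Fmap a = Fmap b := congrArg Subtype.val hab
      rcases Fmap_inj a b hF with h | h
      · rw [h]
      · exact Quot.sound (r := fun a b => b = annulusInv a) h
    · rintro ⟨w, hw⟩
      obtain ⟨p, hp⟩ := Fmap_surj w hw
      exact ⟨Quot.mk _ p, Subtype.ext hp⟩
  exact ⟨hGc.homeoOfEquivCompactToT2 (f := Equiv.ofBijective Gmap hGbij)⟩
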